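/- Let λ ≤ 1, c > 0, s ∈ ℝ, and n ≥ 1. Then there exist k > 0 and l > 0 such that the function u(x) = exp(k/|x|^l) satisfies −div((x/|x|)·u(x)) ≥ c·|x|^s·u(x)^λ pointwise for all x ∈ ℝⁿ with 0 < |x| < 1. -/

import Mathlib

open scoped BigOperators

set_option linter.unnecessarySimpa false

lemma deriv_term {n : ℕ} (k l : ℝ) (x : EuclideanSpace ℝ (Fin n)) (hx : 0 < ‖x‖) (i : Fin n) :
    deriv (fun t : ℝ =>
      (x + t • EuclideanSpace.single i (1 : ℝ)) i *
        Real.exp (k / ‖x + t • EuclideanSpace.single i (1 : ℝ)‖ ^ l) /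
        ‖x + t • EuclideanSpace.single i (1 : ℝ)‖) 0
    = Real.exp (k / ‖x‖ ^ l) *
        (1 / ‖x‖ - (x i) ^ 2 * (k * l / (‖x‖ ^ l * ‖x‖ ^ 3) + 1 / ‖x‖ ^ 3)) := by
  set r := ‖x‖ with hr
  have hr0 : r ≠ 0 := ne_of_gt hx
  set q : ℝ → ℝ := fun t => r ^ 2 + (2 * (x i) * t + t ^ 2) with hqdef
  have hq0 : q 0 = r ^ 2 := by simp [hqdef]
  have hroot : Real.sqrt (q 0) = r := by rw [hq0, Real.sqrt_sq hx.le]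
  have hnorm : ∀ t : ℝ, ‖x + t • EuclideanSpace.single i (1 : ℝ)‖ = Real.sqrt (q t) := by
    intro t
    have h1 : ‖x + t • EuclideanSpace.single i (1 : ℝ)‖ ^ 2 = q t := by
      rw [norm_add_sq_real, real_inner_smul_right]
      have h2 : (inner ℝ x (EuclideanSpace.single i (1 : ℝ)) : ℝ) = x i := by
        simpa using EuclideanSpace.inner_single_right i (1 : ℝ) x
      rw [h2, norm_smul, EuclideanSpace.norm_single]
      simp [hqdef]
      ring
    rw [← h1]
    exact (Real.sqrt_sq (norm_nonneg _)).symm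
  have happly : ∀ t : ℝ, (x + t • EuclideanSpace.single i (1 : ℝ)) i = x i + t := by
    intro t
    simp [EuclideanSpace.single_apply]
  have hq : HasDerivAt q (2 * x i) 0 := by
    have h := (((hasDerivAt_id (0 : ℝ)).const_mul (2 * x i)).add (hasDerivAt_pow 2 (0 : ℝ)))
    exact ((hasDerivAt_const (0 : ℝ) (r ^ 2)).add h).congr_deriv (by simp)
  have hR : HasDerivAt (fun t => Real.sqrt (q t)) (x i / r) 0 := by
    have := hq.sqrt (by rw [hq0]; positivity)
    convert this using 1
    rw [hroot]
    field_simp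
  have hRne : Real.sqrt (q 0) ≠ 0 := by rw [hroot]; exact hr0
  have hpow : HasDerivAt (fun t => Real.sqrt (q t) ^ l)
      (x i / r * l * Real.sqrt (q 0) ^ (l - 1)) 0 := hR.rpow_const (Or.inl hRne)
  have hpowne : Real.sqrt (q 0) ^ l ≠ 0 := by
    rw [hroot]; exact ne_of_gt (Real.rpow_pos_of_pos hx l)
  have hinv := (hpow.inv hpowne).const_mul k
  have hexp := hinv.exp
  have hlin : HasDerivAt (fun t : ℝ => x i + t) 1 0 := by
    simpa [Pi.add_def] using (hasDerivAt_const (0 : ℝ) (x i)).add (hasDerivAt_id (0 : ℝ))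
  have hRinv := hR.inv hRne
  have hfull := (hlin.mul hexp).mul hRinv
  have hfun : (fun t : ℝ =>
      (x + t • EuclideanSpace.single i (1 : ℝ)) i *
        Real.exp (k / ‖x + t • EuclideanSpace.single i (1 : ℝ)‖ ^ l) /
        ‖x + t • EuclideanSpace.single i (1 : ℝ)‖)
      = (fun t : ℝ => (x i + t) * Real.exp (k * (Real.sqrt (q t) ^ l)⁻¹) *
          (Real.sqrt (q t))⁻¹) := by
    funext t
    rw [happly, hnorm, div_eq_mul_inv, div_eq_mul_inv]
  have hfull' : HasDerivAt (fun t : ℝ => (x i + t) * Real.exp (k * (Real.sqrt (q t) ^ l)⁻¹) *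
      (Real.sqrt (q t))⁻¹) _ 0 := hfull
  rw [hfun, hfull'.deriv]
  simp only [Pi.mul_apply, Pi.inv_apply]
  rw [hroot]
  have hsub : r ^ (l - 1) = r ^ l / r := by
    rw [Real.rpow_sub hx, Real.rpow_one]
  have hrl : r ^ l ≠ 0 := ne_of_gt (Real.rpow_pos_of_pos hx l)
  rw [hsub, ← div_eq_mul_inv k]
  field_simp
  ring

/-- Pointwise divergence of the radial vector field `(x/|x|)·u(x)`:
`div((x/|x|)u)(x) = Σᵢ ∂/∂xᵢ (xᵢ u(x)/|x|)`. -/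
noncomputable def radialDiv {n : ℕ} (u : EuclideanSpace ℝ (Fin n) → ℝ)
    (x : EuclideanSpace ℝ (Fin n)) : ℝ :=
  ∑ i : Fin n, deriv (fun t : ℝ =>
    (x + t • EuclideanSpace.single i (1 : ℝ)) i *
      u (x + t • EuclideanSpace.single i (1 : ℝ)) /
      ‖x + t • EuclideanSpace.single i (1 : ℝ)‖) 0

lemma radialDiv_eq {n : ℕ} (k l : ℝ) (x : EuclideanSpace ℝ (Fin n)) (hx : 0 < ‖x‖) :
    radialDiv (fun y => Real.exp (k / ‖y‖ ^ l)) x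
      = Real.exp (k / ‖x‖ ^ l) *
          ((n : ℝ) / ‖x‖ - ‖x‖ ^ 2 * (k * l / (‖x‖ ^ l * ‖x‖ ^ 3) + 1 / ‖x‖ ^ 3)) := by
  have hsum : ∑ i : Fin n, (x i) ^ 2 = ‖x‖ ^ 2 := by
    rw [EuclideanSpace.norm_eq, Real.sq_sqrt (by positivity)]
    simp [sq_abs]
  unfold radialDiv
  calc (∑ i : Fin n, deriv (fun t : ℝ =>
        (x + t • EuclideanSpace.single i (1 : ℝ)) i *
          Real.exp (k / ‖x + t • EuclideanSpace.single i (1 : ℝ)‖ ^ l) /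
          ‖x + t • EuclideanSpace.single i (1 : ℝ)‖) 0)
      = ∑ i : Fin n, Real.exp (k / ‖x‖ ^ l) *
          (1 / ‖x‖ - (x i) ^ 2 * (k * l / (‖x‖ ^ l * ‖x‖ ^ 3) + 1 / ‖x‖ ^ 3)) := by
        exact Finset.sum_congr rfl fun i _ => deriv_term k l x hx i
    _ = Real.exp (k / ‖x‖ ^ l) *
          ((n : ℝ) / ‖x‖ - ‖x‖ ^ 2 * (k * l / (‖x‖ ^ l * ‖x‖ ^ 3) + 1 / ‖x‖ ^ 3)) := by
        rw [← Finset.mul_sum]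
        congr 1
        rw [Finset.sum_sub_distrib, Finset.sum_const, ← Finset.sum_mul, hsum]
        simp
        ring

theorem first_order_counterexample_subcritical (n : ℕ) (hn : 1 ≤ n) (lam s c : ℝ)
    (hlam : lam ≤ 1) (hc : 0 < c) :
    ∃ k > (0 : ℝ), ∃ l > (0 : ℝ), ∀ x : EuclideanSpace ℝ (Fin n), 0 < ‖x‖ → ‖x‖ < 1 →
      -radialDiv (fun y => Real.exp (k / ‖y‖ ^ l)) x
        ≥ c * ‖x‖ ^ s * Real.exp (k / ‖x‖ ^ l) ^ lam := by
  set L : ℝ := max 1 (-s - 1) with hLdef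
  have hL1 : (1 : ℝ) ≤ L := le_max_left _ _
  have hL : 0 < L := lt_of_lt_of_le one_pos hL1
  set K : ℝ := ((n : ℝ) + c) / L with hKdef
  have hnc : (0 : ℝ) < (n : ℝ) + c := by positivity
  have hK : 0 < K := div_pos hnc hL
  refine ⟨K, hK, L, hL, fun x hx hx1 => ?_⟩
  set r : ℝ := ‖x‖ with hr
  set U : ℝ := Real.exp (K / r ^ L) with hU
  have hrL : 0 < r ^ L := Real.rpow_pos_of_pos hx L
  have hU0 : 0 < U := Real.exp_pos _
  have hU1 : 1 ≤ U := Real.one_le_exp (by positivity)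
  have hKL : K * L = (n : ℝ) + c := by
    rw [hKdef]; field_simp
  rw [radialDiv_eq K L x hx]
  have heq : -(Real.exp (K / r ^ L) *
      ((n : ℝ) / r - r ^ 2 * (K * L / (r ^ L * r ^ 3) + 1 / r ^ 3)))
      = U * (((n : ℝ) + c) / (r ^ L * r) - ((n : ℝ) - 1) / r) := by
    rw [← hKL]
    field_simp
    ring
  rw [heq]
  -- key inequality
  have hrL1 : r ^ L ≤ 1 := Real.rpow_le_one hx.le hx1.le hL.le
  have hden : 0 < r ^ L * r := by positivity
  have h1r : 1 / r ≤ 1 / (r ^ L * r) := by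
    apply one_div_le_one_div_of_le hden
    nlinarith
  have hrs : r ^ s ≤ 1 / (r ^ L * r) := by
    have h2 : r ^ s ≤ r ^ (-(L + 1)) :=
      Real.rpow_le_rpow_of_exponent_ge hx hx1.le (by
        have := le_max_right (1 : ℝ) (-s - 1); linarith [hL1])
    have h3 : r ^ (-(L + 1)) = 1 / (r ^ L * r) := by
      rw [Real.rpow_neg hx.le, Real.rpow_add hx, Real.rpow_one, one_div]
    linarith [h2, h3.le]
  have key : ((n : ℝ) - 1) / r + c * r ^ s ≤ ((n : ℝ) + c) / (r ^ L * r) := by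
    have hn1 : (0 : ℝ) ≤ (n : ℝ) - 1 := by
      have : (1 : ℝ) ≤ (n : ℝ) := by exact_mod_cast hn
      linarith
    have e1 : ((n : ℝ) - 1) / r ≤ ((n : ℝ) - 1) * (1 / (r ^ L * r)) := by
      rw [div_eq_mul_one_div]
      exact mul_le_mul_of_nonneg_left h1r hn1
    have e2 : c * r ^ s ≤ c * (1 / (r ^ L * r)) :=
      mul_le_mul_of_nonneg_left hrs hc.le
    have e3 : ((n : ℝ) - 1) * (1 / (r ^ L * r)) + c * (1 / (r ^ L * r))
        ≤ ((n : ℝ) + c) / (r ^ L * r) := by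
      rw [div_eq_mul_one_div ((n : ℝ) + c) (r ^ L * r)]
      have h1d : 0 ≤ 1 / (r ^ L * r) := by positivity
      nlinarith
    linarith
  have hUlam : U ^ lam ≤ U := by
    have := Real.rpow_le_rpow_of_exponent_le hU1 hlam
    rwa [Real.rpow_one] at this
  have hrs0 : 0 ≤ c * r ^ s := by positivity
  calc c * r ^ s * U ^ lam ≤ c * r ^ s * U :=
        mul_le_mul_of_nonneg_left hUlam hrs0
    _ ≤ (((n : ℝ) + c) / (r ^ L * r) - ((n : ℝ) - 1) / r) * U := by
        apply mul_le_mul_of_nonneg_right _ hU0.le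
        linarith
    _ = U * (((n : ℝ) + c) / (r ^ L * r) - ((n : ℝ) - 1) / r) := by ring
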